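/- arXiv:1002.0536 — 4 statements merged into one kernel-verified Lean document; each statement's English description precedes it below -/
import Mathlib

section
/- Let H be a subgroup of index 2 in G, J₁, J₂ ≤ H, y ∈ G \ H, and P = {hJ₁ : h ∈ H} ∪ {yhJ₂ : h ∈ H}. Then gP = P for all g ∈ G if and only if J₁ = J₂. -/
open Pointwise

/-- The action of `g : G` on a family of subsets of `G` by left multiplication. -/
def smulFam {G : Type*} [Group G] (g : G) (P : Set (Set G)) : Set (Set G) :=
  (fun S => g • S) '' P

/-- The Type II family `{hJ₁ : h ∈ H} ∪ {yhJ₂ : h ∈ H}` of subsets of `G`. -/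
def typeIIFam {G : Type*} [Group G] (H J₁ J₂ : Subgroup G) (y : G) : Set (Set G) :=
  {S : Set G | ∃ h ∈ H, S = h • (J₁ : Set G)} ∪
    {S : Set G | ∃ h ∈ H, S = (y * h) • (J₂ : Set G)}

theorem stmt_5 {G : Type*} [Group G] (H J₁ J₂ : Subgroup G) (hH : H.index = 2)
    (hJ₁ : J₁ ≤ H) (hJ₂ : J₂ ≤ H) (y : G) (hy : y ∉ H) :
    (∀ g : G, smulFam g (typeIIFam H J₁ J₂ y) = typeIIFam H J₁ J₂ y) ↔ J₁ = J₂ := by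
  constructor
  · intro hinv
    have hJmem : (J₁ : Set G) ∈ typeIIFam H J₁ J₂ y :=
      Or.inl ⟨1, H.one_mem, by simp⟩
    have : y • (J₁ : Set G) ∈ typeIIFam H J₁ J₂ y := by
      rw [← hinv y]; exact ⟨(J₁ : Set G), hJmem, rfl⟩
    rcases this with ⟨h, hh, heq⟩ | ⟨h, hh, heq⟩
    · exfalso
      have hymem : y ∈ y • (J₁ : Set G) := ⟨1, J₁.one_mem, by simp⟩
      rw [heq] at hymem
      obtain ⟨j, hj, hjy⟩ := hymem
      exact hy (hjy ▸ H.mul_mem hh (hJ₁ hj))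
    · have h2 : (J₁ : Set G) = h • (J₂ : Set G) := by
        have := heq
        rw [mul_smul] at this
        exact smul_left_cancel y this
      have h1mem : (1 : G) ∈ h • (J₂ : Set G) := h2 ▸ J₁.one_mem
      obtain ⟨j, hj, hj1⟩ := h1mem
      have hhJ : h ∈ J₂ := by
        have : h = j⁻¹ := by
          simp only [smul_eq_mul] at hj1
          exact eq_inv_of_mul_eq_one_left hj1
        exact this ▸ J₂.inv_mem hj
      apply SetLike.ext'
      rw [h2, smul_coe_set hhJ]
  · rintro rfl
    have key : ∀ g : G, smulFam g (typeIIFam H J₁ J₁ y) ⊆ typeIIFam H J₁ J₁ y := by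
      rintro g S ⟨T, hT, rfl⟩
      rcases hT with ⟨h, hh, rfl⟩ | ⟨h, hh, rfl⟩
      · simp only [smul_smul]
        by_cases hg : g * h ∈ H
        · exact Or.inl ⟨g * h, hg, rfl⟩
        · refine Or.inr ⟨y⁻¹ * (g * h), ?_, by rw [mul_inv_cancel_left]⟩
          rw [Subgroup.mul_mem_iff_of_index_two hH]
          simp [hg, hy, H.inv_mem_iff]
      · simp only [smul_smul]
        by_cases hg : g * (y * h) ∈ H
        · exact Or.inl ⟨g * (y * h), hg, rfl⟩
        · refine Or.inr ⟨y⁻¹ * (g * (y * h)), ?_, by rw [mul_inv_cancel_left]⟩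
          rw [Subgroup.mul_mem_iff_of_index_two hH]
          simp [hg, hy, H.inv_mem_iff]
    intro g
    apply subset_antisymm (key g)
    intro S hS
    have : g⁻¹ • S ∈ typeIIFam H J₁ J₁ y := key g⁻¹ ⟨S, hS, rfl⟩
    exact ⟨g⁻¹ • S, this, by simp [smul_smul]⟩
end

section
/- Let H be a subgroup of index 2 in a group G, J ≤ H, and r ∈ G \ H. The collection P = {h(J ∪ Jr) : h ∈ H} satisfies gP = P for all g ∈ G if and only if rJ = Jr and r² ∈ J. -/
open Pointwise

/-- The Type I family `{h(J ∪ Jr) : h ∈ H}` of subsets of `G`. -/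
def typeIFam {G : Type*} [Group G] (H : Subgroup G) (J : Set G) (r : G) : Set (Set G) :=
  {S : Set G | ∃ h ∈ H, S = h • (J ∪ J * ({r} : Set G))}

lemma memB_aux {G : Type*} [Group G] (J : Subgroup G) (r x : G) :
    x ∈ ((J:Set G) ∪ (J:Set G) * {r}) ↔ x ∈ J ∨ x * r⁻¹ ∈ J := by
  simp only [Set.mem_union, Set.mul_singleton, Set.mem_image, SetLike.mem_coe]
  constructor
  · rintro (h | ⟨a, ha, rfl⟩)
    · exact Or.inl h
    · simpa using Or.inr ha
  · rintro (h | h)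
    · exact Or.inl h
    · exact Or.inr ⟨x * r⁻¹, h, by group⟩

lemma smulB_of_memJ {G : Type*} [Group G] (J : Subgroup G) (r : G) {h : G} (hh : h ∈ J) :
    h • ((J:Set G) ∪ (J:Set G) * {r}) = ((J:Set G) ∪ (J:Set G) * {r}) := by
  ext x
  rw [Set.mem_smul_set_iff_inv_smul_mem, smul_eq_mul, memB_aux, memB_aux, mul_assoc,
    J.mul_mem_cancel_left (J.inv_mem hh), J.mul_mem_cancel_left (J.inv_mem hh)]

theorem stmt_9 {G : Type*} [Group G] (H J : Subgroup G) (hH : H.index = 2)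
    (hJ : J ≤ H) (r : G) (hr : r ∉ H) :
    (∀ g : G, smulFam g (typeIFam H (J : Set G) r) = typeIFam H (J : Set G) r) ↔
      (r • (J : Set G) = (J : Set G) * ({r} : Set G) ∧ r ^ 2 ∈ J) := by
  set B : Set G := (J:Set G) ∪ (J:Set G) * {r} with hBdef
  have hrinv : r⁻¹ ∉ H := fun h => hr (by simpa using H.inv_mem h)
  constructor
  · intro hP
    -- B itself is in the family
    have hB1 : B ∈ typeIFam H (J : Set G) r := ⟨1, H.one_mem, (one_smul _ _).symm⟩
    have hrB : r • B ∈ typeIFam H (J : Set G) r := by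
      rw [← hP r]; exact Set.mem_image_of_mem _ hB1
    obtain ⟨h, hh, heq⟩ := hrB
    -- h ∈ J
    have hrmem : r ∈ r • B :=
      ⟨1, Or.inl (SetLike.mem_coe.mpr J.one_mem), by simp⟩
    rw [heq] at hrmem
    have hrmem' : h⁻¹ * r ∈ B := by
      rwa [Set.mem_smul_set_iff_inv_smul_mem, smul_eq_mul] at hrmem
    have hhJ : h ∈ J := by
      rcases (memB_aux J r _).mp hrmem' with h1 | h1
      · exact absurd (by simpa using H.mul_mem hh (hJ h1) : r ∈ H) hr
      · rw [mul_assoc, mul_inv_cancel, mul_one] at h1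
        simpa using J.inv_mem h1
    -- hence r • B = B
    have hrBB : r • B = B := by rw [heq, smulB_of_memJ J r hhJ]
    -- membership characterization of r • B = B
    have key : ∀ x : G, (r⁻¹ * x ∈ J ∨ r⁻¹ * x * r⁻¹ ∈ J) ↔ (x ∈ J ∨ x * r⁻¹ ∈ J) := by
      intro x
      rw [← memB_aux J r (r⁻¹ * x), ← memB_aux J r x]
      show r⁻¹ * x ∈ B ↔ x ∈ B
      conv_rhs => rw [← hrBB]
      rw [Set.mem_smul_set_iff_inv_smul_mem, smul_eq_mul]
    constructor
    · -- r • J = J * {r}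
      ext x
      rw [Set.mem_smul_set_iff_inv_smul_mem, smul_eq_mul, SetLike.mem_coe]
      constructor
      · intro hx
        rcases (key x).mp (Or.inl hx) with h1 | h1
        · exfalso
          exact hrinv (by simpa using H.mul_mem (hJ hx) (H.inv_mem (hJ h1)))
        · rw [Set.mul_singleton, Set.mem_image]
          exact ⟨x * r⁻¹, h1, by group⟩
      · intro hx
        rw [Set.mul_singleton, Set.mem_image] at hx
        obtain ⟨a, ha, rfl⟩ := hx
        have h1 : a * r * r⁻¹ ∈ J := by simpa using ha
        rcases (key (a * r)).mpr (Or.inr h1) with h2 | h2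
        · exact h2
        · exfalso
          have h3 : r⁻¹ * a ∈ H := by
            have h4 := hJ h2
            rwa [show r⁻¹ * (a * r) * r⁻¹ = r⁻¹ * a by group] at h4
          exact hrinv (by simpa using H.mul_mem h3 (H.inv_mem (hJ ha)))
    · -- r ^ 2 ∈ J
      have hmm : r * r ∈ r • B := ⟨r, (memB_aux J r r).mpr (Or.inr (by simpa using J.one_mem)), rfl⟩
      rw [hrBB] at hmm
      rcases (memB_aux J r _).mp hmm with h1 | h1
      · rwa [pow_two]
      · exfalso
        rw [mul_assoc, mul_inv_cancel, mul_one] at h1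
        exact hr (hJ h1)
  · rintro ⟨hc, hsq⟩
    -- elementwise form of r • J = J * {r}
    have hc' : ∀ y : G, r⁻¹ * y ∈ J ↔ y * r⁻¹ ∈ J := by
      intro y
      constructor
      · intro h1
        have h2 : y ∈ (J:Set G) * {r} := by
          rw [← hc]
          exact ⟨r⁻¹ * y, h1, by simp⟩
        rw [Set.mul_singleton, Set.mem_image] at h2
        obtain ⟨a, ha, rfl⟩ := h2
        simpa using ha
      · intro h1
        have h2 : y ∈ r • (J:Set G) := by
          rw [hc, Set.mul_singleton, Set.mem_image]
          exact ⟨y * r⁻¹, h1, by group⟩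
        rwa [Set.mem_smul_set_iff_inv_smul_mem, smul_eq_mul, SetLike.mem_coe] at h2
    -- r • B = B
    have hrBB : r • B = B := by
      ext x
      rw [Set.mem_smul_set_iff_inv_smul_mem, smul_eq_mul, memB_aux, memB_aux, hc' x,
        mul_assoc, hc' (x * r⁻¹)]
      have hx : x * r⁻¹ * r⁻¹ ∈ J ↔ x ∈ J := by
        constructor
        · intro h1
          have h2 := J.mul_mem h1 hsq
          rwa [show x * r⁻¹ * r⁻¹ * r ^ 2 = x by group] at h2
        · intro h1
          have h2 := J.mul_mem h1 (J.inv_mem hsq)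
          rwa [show x * (r ^ 2)⁻¹ = x * r⁻¹ * r⁻¹ by group] at h2
      rw [hx]
      tauto
    -- for every g, g • B = h' • B for some h' ∈ H
    have key : ∀ g : G, ∃ h' ∈ H, g • B = h' • B := by
      intro g
      by_cases hg : g ∈ H
      · exact ⟨g, hg, rfl⟩
      · refine ⟨g * r⁻¹, ?_, ?_⟩
        · exact (Subgroup.mul_mem_iff_of_index_two hH).mpr (by simp [hg, hrinv])
        · conv_rhs => rw [← hrBB]
          rw [smul_smul, show g * r⁻¹ * r = g by group]
    intro g
    ext S
    constructor
    · rintro ⟨T, ⟨h, hh, rfl⟩, rfl⟩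
      obtain ⟨h', hh', he⟩ := key (g * h)
      refine ⟨h', hh', ?_⟩
      show g • h • B = h' • B
      rw [smul_smul, he]
    · rintro ⟨h, hh, rfl⟩
      obtain ⟨h', hh', he⟩ := key (g⁻¹ * h)
      refine ⟨h' • B, ⟨h', hh', rfl⟩, ?_⟩
      show g • (h' • B) = h • B
      rw [← he, smul_smul, show g * (g⁻¹ * h) = h by group]
end

section
/- Let H be a subgroup of index 2 in G, J a normal subgroup of G contained in H, and r ∈ G \ H. Then the partition P = {h(J ∪ Jr) : h ∈ H} satisfies gP = P for all g ∈ G if and only if r² ∈ J. -/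
open Pointwise

section Aux

variable {G : Type*} [Group G]

lemma aux_normal_of_index_two {H : Subgroup G} (hH : H.index = 2) : H.Normal := by
  constructor
  intro n hn g
  rw [Subgroup.mul_mem_iff_of_index_two hH, Subgroup.mul_mem_iff_of_index_two hH,
    H.inv_mem_iff]
  tauto

lemma aux_mem_mul_singleton {J : Set G} {r x : G} :
    x ∈ J * ({r} : Set G) ↔ x * r⁻¹ ∈ J := by
  simp [Set.mul_singleton, eq_comm, eq_mul_inv_iff_mul_eq]

lemma aux_smul_normal (J : Subgroup G) (hJn : J.Normal) (g : G) :
    g • (J : Set G) = (J : Set G) * {g} := by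
  ext x
  rw [Set.mem_smul_set_iff_inv_smul_mem, aux_mem_mul_singleton, smul_eq_mul]
  constructor
  · intro h
    have := hJn.conj_mem _ h g
    simpa [mul_assoc] using this
  · intro h
    have := hJn.conj_mem _ h g⁻¹
    simpa [mul_assoc] using this

/-- If `g • B = k • B` for some `k ∈ H` and `H` is normal, then `g` stabilizes the family. -/
lemma aux_smulFam_eq (H : Subgroup G) (hN : H.Normal) (B : Set G) (g : G)
    (hg : ∃ k ∈ H, g • B = k • B) :
    smulFam g {S : Set G | ∃ h ∈ H, S = h • B} = {S : Set G | ∃ h ∈ H, S = h • B} := by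
  obtain ⟨k, hk, hgB⟩ := hg
  have hB : (k⁻¹ * g) • B = B := by
    rw [mul_smul, hgB, inv_smul_smul]
  ext S
  constructor
  · rintro ⟨T, ⟨h, hh, rfl⟩, rfl⟩
    refine ⟨g * h * g⁻¹ * k, mul_mem (hN.conj_mem h hh g) hk, ?_⟩
    show g • h • B = _
    rw [smul_smul, mul_smul (g * h * g⁻¹) k, ← hgB, smul_smul]
    congr 1
    group
  · rintro ⟨h, hh, rfl⟩
    refine ⟨(g⁻¹ * (h * k⁻¹) * g) • B, ⟨_, hN.conj_mem _ (mul_mem hh (H.inv_mem hk)) g⁻¹, by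
      simp [mul_assoc]⟩, ?_⟩
    have : h • B = (g * (g⁻¹ * (h * k⁻¹) * g)) • B := by
      have : (g * (g⁻¹ * (h * k⁻¹) * g)) = h * (k⁻¹ * g) := by group
      rw [this, mul_smul, hB]
    simp only [← smul_smul] at this ⊢
    exact this.symm

end Aux

theorem stmt_11 {G : Type*} [Group G] (H J : Subgroup G) (hH : H.index = 2)
    (hJ : J ≤ H) (hJn : J.Normal) (r : G) (hr : r ∉ H) :
    (∀ g : G, smulFam g (typeIFam H (J : Set G) r) = typeIFam H (J : Set G) r) ↔
      r ^ 2 ∈ J := by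
  have hN : H.Normal := aux_normal_of_index_two hH
  set B : Set G := (J : Set G) ∪ (J : Set G) * ({r} : Set G) with hBdef
  have hmemB : ∀ x, x ∈ B ↔ x ∈ J ∨ x * r⁻¹ ∈ J := by
    intro x
    simp [hBdef, aux_mem_mul_singleton]
  constructor
  · intro hP
    have hBmem : B ∈ typeIFam H (J : Set G) r := ⟨1, H.one_mem, (one_smul G B).symm⟩
    have hrB : r • B ∈ typeIFam H (J : Set G) r := by
      rw [← hP r]; exact ⟨B, hBmem, rfl⟩
    obtain ⟨h, hh, heq⟩ := hrB
    rw [← hBdef] at heq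
    have hrmemB : r ∈ B := (hmemB r).2 (Or.inr (by simpa using J.one_mem))
    -- r ∈ r • B = h • B
    have h1 : h⁻¹ * r ∈ B := by
      have : r ∈ h • B := by
        rw [← heq]
        exact ⟨1, (hmemB 1).2 (Or.inl J.one_mem), by simp⟩
      rwa [Set.mem_smul_set_iff_inv_smul_mem, smul_eq_mul] at this
    have h2 : h⁻¹ * (r * r) ∈ B := by
      have : r * r ∈ h • B := by
        rw [← heq]
        exact ⟨r, hrmemB, rfl⟩
      rwa [Set.mem_smul_set_iff_inv_smul_mem, smul_eq_mul] at this
    have hhJ : h⁻¹ ∈ J := by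
      rcases (hmemB _).1 h1 with hc | hc
      · exact absurd (by simpa using mul_mem hh (hJ hc) : r ∈ H) hr
      · simpa [mul_assoc] using hc
    rcases (hmemB _).1 h2 with hc | hc
    · have : r * r ∈ J := by
        have := mul_mem (J.inv_mem hhJ) hc
        simpa [mul_assoc] using this
      simpa [pow_two] using this
    · exfalso
      have : h⁻¹ * r ∈ J := by simpa [mul_assoc] using hc
      exact hr (by simpa using mul_mem hh (hJ this) : r ∈ H)
  · intro hr2 g
    have hBr : r • B = B := by
      have h1 : r • (J : Set G) = (J : Set G) * {r} := aux_smul_normal J hJn r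
      have h2 : r • ((J : Set G) * ({r} : Set G)) = (J : Set G) := by
        ext x
        rw [Set.mem_smul_set_iff_inv_smul_mem, smul_eq_mul, aux_mem_mul_singleton]
        constructor
        · intro hx
          have h3 : r * (r⁻¹ * x * r⁻¹) * r⁻¹ ∈ J := hJn.conj_mem _ hx r
          have h4 : x * (r * r)⁻¹ ∈ J := by
            simpa [mul_assoc] using h3
          have := mul_mem h4 (by simpa [pow_two] using hr2 : r * r ∈ J)
          simpa [mul_assoc] using this
        · intro hx
          have hx2 : x * (r * r)⁻¹ ∈ J := by
            have := mul_mem hx (J.inv_mem (by simpa [pow_two] using hr2 : r * r ∈ J))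
            simpa [mul_assoc] using this
          have h3 : r⁻¹ * (x * (r * r)⁻¹) * r⁻¹⁻¹ ∈ J := hJn.conj_mem _ hx2 r⁻¹
          simpa [mul_assoc] using h3
      rw [hBdef, Set.smul_set_union, h1, h2, Set.union_comm]
    by_cases hg : g ∈ H
    · exact aux_smulFam_eq H hN B g ⟨g, hg, rfl⟩
    · have hk : g * r⁻¹ ∈ H := by
        rw [Subgroup.mul_mem_iff_of_index_two hH, H.inv_mem_iff]
        tauto
      have : g • B = (g * r⁻¹) • B := by
        conv_rhs => rw [← hBr]
        rw [smul_smul]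
        congr 1
        group
      exact aux_smulFam_eq H hN B g ⟨g * r⁻¹, hk, this⟩
end

section
/- Let G = D_n be the dihedral group generated by a rotation a of order n and a reflection b, and let H = ⟨a⟩ be the cyclic rotation subgroup (of index 2). For every subgroup J ≤ H and every r ∈ G \ H, the partition P = {h(J ∪ Jr) : h ∈ H} satisfies gP = P for all g ∈ G. (No Type I partition of D_n gives a chirally perfect coloring.) -/
open Pointwise

/-- The rotation subgroup `⟨a⟩` of the dihedral group `D_n`. -/
def rotations (n : ℕ) : Subgroup (DihedralGroup n) where
  carrier := Set.range DihedralGroup.r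
  mul_mem' := by rintro _ _ ⟨i, rfl⟩ ⟨j, rfl⟩; exact ⟨i + j, rfl⟩
  one_mem' := ⟨0, rfl⟩
  inv_mem' := by rintro _ ⟨i, rfl⟩; exact ⟨-i, rfl⟩

lemma refl_sq {n : ℕ} {r : DihedralGroup n} (hr : r ∉ rotations n) : r * r = 1 := by
  obtain (i | i) := r
  · exact absurd ⟨i, rfl⟩ hr
  · exact DihedralGroup.sr_mul_self i

lemma refl_inv {n : ℕ} {r : DihedralGroup n} (hr : r ∉ rotations n) : r⁻¹ = r :=
  inv_eq_of_mul_eq_one_right (refl_sq hr)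

lemma conj_mem {n : ℕ} (J : Subgroup (DihedralGroup n)) (hJ : J ≤ rotations n)
    {r : DihedralGroup n} (hr : r ∉ rotations n) {x : DihedralGroup n} (hx : x ∈ J) :
    r * x * r ∈ J := by
  obtain ⟨i, rfl⟩ := hJ hx
  obtain (k | k) := r
  · exact absurd ⟨k, rfl⟩ hr
  · have : DihedralGroup.sr k * DihedralGroup.r i * DihedralGroup.sr k
        = (DihedralGroup.r i)⁻¹ := by
      rw [DihedralGroup.sr_mul_r, DihedralGroup.sr_mul_sr]
      refine eq_inv_of_mul_eq_one_left ?_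
      rw [DihedralGroup.r_mul_r]
      have : k - (k + i) + i = 0 := by ring
      rw [this, DihedralGroup.one_def]
    rw [this]; exact J.inv_mem hx

lemma r_smul_J {n : ℕ} (J : Subgroup (DihedralGroup n)) (hJ : J ≤ rotations n)
    {r : DihedralGroup n} (hr : r ∉ rotations n) :
    r • (J : Set (DihedralGroup n)) = (J : Set (DihedralGroup n)) * {r} := by
  ext x
  rw [Set.mem_smul_set_iff_inv_smul_mem, Set.mul_singleton, refl_inv hr]
  constructor
  · intro h
    refine ⟨r * (r * x) * r, conj_mem J hJ hr h, ?_⟩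
    show r * (r * x) * r * r = x
    rw [mul_assoc (r * (r * x)) r r, refl_sq hr, mul_one, ← mul_assoc r r x,
      refl_sq hr, one_mul]
  · rintro ⟨y, hy, rfl⟩
    have := conj_mem J hJ hr hy
    simpa [smul_eq_mul, mul_assoc, refl_sq hr] using this

lemma r_smul_S {n : ℕ} (J : Subgroup (DihedralGroup n)) (hJ : J ≤ rotations n)
    {r : DihedralGroup n} (hr : r ∉ rotations n) :
    r • ((J : Set (DihedralGroup n)) ∪ (J : Set (DihedralGroup n)) * {r})
      = (J : Set (DihedralGroup n)) ∪ (J : Set (DihedralGroup n)) * {r} := by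
  rw [Set.smul_set_union, r_smul_J J hJ hr, ← smul_mul_assoc, r_smul_J J hJ hr,
    mul_assoc, Set.singleton_mul_singleton, refl_sq hr, Set.singleton_one, mul_one,
    Set.union_comm]

theorem stmt_14 (n : ℕ) (J : Subgroup (DihedralGroup n)) (hJ : J ≤ rotations n)
    (r : DihedralGroup n) (hr : r ∉ rotations n) :
    ∀ g : DihedralGroup n,
      smulFam g (typeIFam (rotations n) (J : Set (DihedralGroup n)) r) =
        typeIFam (rotations n) (J : Set (DihedralGroup n)) r := by
  set S : Set (DihedralGroup n) := (J : Set _) ∪ (J : Set _) * {r} with hS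
  -- key lemma
  have key : ∀ g : DihedralGroup n, ∀ h ∈ rotations n,
      ∃ h' ∈ rotations n, g • (h • S) = h' • S := by
    intro g h hh
    by_cases hg : g ∈ rotations n
    · exact ⟨g * h, (rotations n).mul_mem hg hh, smul_smul g h S⟩
    · refine ⟨g * h * r, ?_, ?_⟩
      · -- g*h*r is a rotation
        obtain (i | i) := g
        · exact absurd ⟨i, rfl⟩ hg
        obtain ⟨j, rfl⟩ := hh
        obtain (k | k) := r
        · exact absurd ⟨k, rfl⟩ hr
        refine ⟨k - (i + j), ?_⟩
        rw [DihedralGroup.sr_mul_r, DihedralGroup.sr_mul_sr]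
      · rw [smul_smul, mul_smul (g * h) r S, r_smul_S J hJ hr]
  intro g
  ext T
  constructor
  · rintro ⟨T', ⟨h, hh, rfl⟩, rfl⟩
    obtain ⟨h', hh', heq⟩ := key g h hh
    exact ⟨h', hh', heq⟩
  · rintro ⟨h', hh', rfl⟩
    obtain ⟨h, hh, heq⟩ := key g⁻¹ h' hh'
    refine ⟨h • S, ⟨h, hh, rfl⟩, ?_⟩
    show g • (h • S) = h' • S
    rw [← heq, smul_inv_smul]
end
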